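/- Let w123, w321, w12 be nonnegative real numbers. Let L₃ be the 3×3 complex matrix [[w123 + w321 + w12, −w321 − w12, −w123], [−w123 − w12, w123 + w321 + w12, −w321], [−w321, −w123, w123 + w321]], and with d₂ = w123 + w321 + w12 let L₆ be the 6×6 complex matrix with rows [d₂, −w321, −w123, −w12, 0, 0], [−w123, d₂, −w321, 0, 0, −w12], [−w321, −w123, d₂, 0, −w12, 0], [−w12, 0, 0, d₂, −w321, −w123], [0, 0, −w12, −w123, d₂, −w321], [0, −w12, 0, −w321, −w123, d₂]. Then every complex eigenvalue of L₃ is also an eigenvalue of L₆ (the spectrum of L₃ is contained in the spectrum of L₆). -/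
import Mathlib


open Matrix

@[simp] lemma cons_val_five' {m : ℕ} {α : Type*} (x : α) (u : Fin (m+5) → α) :
    vecCons x u 5 = vecHead (vecTail (vecTail (vecTail (vecTail u)))) :=
  rfl

/-- Intertwining relation for `G₂(3)`: every complex eigenvalue of the Laplacian `L₃` of the
underlying graph (cycle weights `w123`, `w321` and transposition weight `w12`, all
nonnegative) is also an eigenvalue of the Laplacian `L₆` of the six-vertex induced graph. -/
theorem spectrum_inclusion_G2_3 (w123 w321 w12 : ℝ)
    (h123 : 0 ≤ w123) (h321 : 0 ≤ w321) (h12 : 0 ≤ w12) :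
    spectrum ℂ
      (!![(w123 + w321 + w12 : ℂ), -w321 - w12, -w123;
          -w123 - w12, w123 + w321 + w12, -w321;
          -w321, -w123, w123 + w321] : Matrix (Fin 3) (Fin 3) ℂ) ⊆
    spectrum ℂ
      (!![(w123 + w321 + w12 : ℂ), -w321, -w123, -w12, 0, 0;
          -w123, w123 + w321 + w12, -w321, 0, 0, -w12;
          -w321, -w123, w123 + w321 + w12, 0, -w12, 0;
          -w12, 0, 0, w123 + w321 + w12, -w321, -w123;
          0, 0, -w12, -w123, w123 + w321 + w12, -w321;
          0, -w12, 0, -w321, -w123, w123 + w321 + w12] : Matrix (Fin 6) (Fin 6) ℂ) := by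
  set L3 : Matrix (Fin 3) (Fin 3) ℂ :=
      !![(w123 + w321 + w12 : ℂ), -w321 - w12, -w123;
          -w123 - w12, w123 + w321 + w12, -w321;
          -w321, -w123, w123 + w321] with hL3
  set L6 : Matrix (Fin 6) (Fin 6) ℂ :=
      !![(w123 + w321 + w12 : ℂ), -w321, -w123, -w12, 0, 0;
          -w123, w123 + w321 + w12, -w321, 0, 0, -w12;
          -w321, -w123, w123 + w321 + w12, 0, -w12, 0;
          -w12, 0, 0, w123 + w321 + w12, -w321, -w123;
          0, 0, -w12, -w123, w123 + w321 + w12, -w321;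
          0, -w12, 0, -w321, -w123, w123 + w321 + w12] with hL6
  set S : Matrix (Fin 6) (Fin 3) ℂ :=
      !![1,0,0; 0,1,0; 0,0,1; 0,1,0; 0,0,1; 1,0,0] with hS
  set T : Matrix (Fin 3) (Fin 6) ℂ :=
      !![1,0,0,0,0,0; 0,1,0,0,0,0; 0,0,1,0,0,0] with hT
  have hTS : T * S = 1 := by
    ext i j
    fin_cases i <;> fin_cases j <;>
      simp [hT, hS, Matrix.mul_apply, Fin.sum_univ_succ]
  have hint : L6 * S = S * L3 := by
    ext i j
    fin_cases i <;> fin_cases j <;>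
      (simp [hT, hS, hL3, hL6, Matrix.mul_apply, Fin.sum_univ_succ]; try ring)
  intro lam hlam
  rw [spectrum.mem_iff] at hlam ⊢
  rw [Matrix.isUnit_iff_isUnit_det, isUnit_iff_ne_zero, not_not,
    ← Matrix.exists_mulVec_eq_zero_iff] at hlam
  obtain ⟨v, hv, hv0⟩ := hlam
  rw [Matrix.isUnit_iff_isUnit_det, isUnit_iff_ne_zero, not_not,
    ← Matrix.exists_mulVec_eq_zero_iff]
  have hcomm : (algebraMap ℂ (Matrix (Fin 6) (Fin 6) ℂ) lam - L6) * S
      = S * (algebraMap ℂ (Matrix (Fin 3) (Fin 3) ℂ) lam - L3) := by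
    rw [Matrix.sub_mul, Matrix.mul_sub, hint]
    congr 1
    simp [Algebra.algebraMap_eq_smul_one, Matrix.smul_mul, Matrix.mul_smul]
  refine ⟨S.mulVec v, ?_, ?_⟩
  · intro h
    apply hv
    have h2 : T.mulVec (S.mulVec v) = T.mulVec 0 := congrArg _ h
    rwa [Matrix.mulVec_mulVec, hTS, Matrix.one_mulVec, Matrix.mulVec_zero] at h2
  · rw [Matrix.mulVec_mulVec, hcomm, ← Matrix.mulVec_mulVec, hv0, Matrix.mulVec_zero]
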